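/- Let ρ ∈ ℝᴺ with ρₖ > 0, μ₁ = (1/N)Σρₖ, μ₃ = (1/N)Σ(1/ρₖ), τ, ε > 0, and suppose A = D(ρ) + τ·P + τε·Δ_h D(ρ)⁻¹ Δ_h and B = μ₁I + τ·P + τε·μ₃·Δ_h², where P is symmetric positive semidefinite and Δ_h symmetric. Then for all z ≠ 0, min(min_k ρ_k/μ₁, min_k (1/ρ_k)/μ₃) ≤ zᵀAz/zᵀBz ≤ max(max_k ρ_k/μ₁, max_k (1/ρ_k)/μ₃). -/

import Mathlib

open Matrix

theorem preconditioner_rayleigh_bounds (N : ℕ) (hN : 0 < N)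
    (ρ : Fin N → ℝ) (hρ : ∀ k, 0 < ρ k)
    (μ₁ μ₃ : ℝ) (hμ₁ : μ₁ = (∑ k, ρ k) / N) (hμ₃ : μ₃ = (∑ k, (ρ k)⁻¹) / N)
    (τ ε : ℝ) (hτ : 0 < τ) (hε : 0 < ε)
    (P : Matrix (Fin N) (Fin N) ℝ) (hP : P.PosSemidef)
    (Δh : Matrix (Fin N) (Fin N) ℝ) (hΔhSymm : Δhᵀ = Δh)
    (A B : Matrix (Fin N) (Fin N) ℝ)
    (hA : A = Matrix.diagonal ρ + τ • P
      + (τ * ε) • (Δh * Matrix.diagonal (fun k => (ρ k)⁻¹) * Δh))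
    (hB : B = μ₁ • (1 : Matrix (Fin N) (Fin N) ℝ) + τ • P + (τ * ε * μ₃) • (Δh * Δh)) :
    ∀ z : Fin N → ℝ, z ≠ 0 →
      min ((⨅ k, ρ k) / μ₁) ((⨅ k, (ρ k)⁻¹) / μ₃) ≤ (z ⬝ᵥ A *ᵥ z) / (z ⬝ᵥ B *ᵥ z) ∧
      (z ⬝ᵥ A *ᵥ z) / (z ⬝ᵥ B *ᵥ z) ≤ max ((⨆ k, ρ k) / μ₁) ((⨆ k, (ρ k)⁻¹) / μ₃) := by
  intro z hz
  have hN' : (0:ℝ) < N := by exact_mod_cast hN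
  have hne : Nonempty (Fin N) := ⟨⟨0, hN⟩⟩
  have hμ₁pos : 0 < μ₁ := by
    rw [hμ₁]
    exact div_pos (Finset.sum_pos (fun k _ => hρ k) ⟨⟨0, hN⟩, Finset.mem_univ _⟩) hN'
  have hμ₃pos : 0 < μ₃ := by
    rw [hμ₃]
    exact div_pos (Finset.sum_pos (fun k _ => inv_pos.mpr (hρ k)) ⟨⟨0, hN⟩, Finset.mem_univ _⟩) hN'
  set w : Fin N → ℝ := Δh *ᵥ z with hw
  -- quadratic form of a diagonal matrix
  have hdiag : ∀ (d v : Fin N → ℝ), v ⬝ᵥ (Matrix.diagonal d) *ᵥ v = ∑ k, d k * v k ^ 2 := by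
    intro d v
    simp only [dotProduct, mulVec_diagonal]
    exact Finset.sum_congr rfl fun k _ => by ring
  have hvm : z ᵥ* Δh = w := by rw [← hΔhSymm, vecMul_transpose]
  have hkey : ∀ d : Fin N → ℝ,
      z ⬝ᵥ (Δh * Matrix.diagonal d * Δh) *ᵥ z = ∑ k, d k * w k ^ 2 := by
    intro d
    rw [mul_assoc, ← mulVec_mulVec, dotProduct_mulVec, hvm, ← mulVec_mulVec, ← hw, hdiag]
  have hΔΔ : z ⬝ᵥ (Δh * Δh) *ᵥ z = ∑ k, w k ^ 2 := by
    rw [← mulVec_mulVec, dotProduct_mulVec, hvm]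
    simp only [dotProduct]
    exact Finset.sum_congr rfl fun k _ => by ring
  have hquadA : z ⬝ᵥ A *ᵥ z = (∑ k, ρ k * z k ^ 2) + τ * (z ⬝ᵥ P *ᵥ z)
      + τ * ε * (∑ k, (ρ k)⁻¹ * w k ^ 2) := by
    rw [hA, add_mulVec, add_mulVec, dotProduct_add, dotProduct_add, hdiag,
      smul_mulVec, smul_mulVec, dotProduct_smul, dotProduct_smul,
      hkey, smul_eq_mul, smul_eq_mul]
  have hself : z ⬝ᵥ z = ∑ k, z k ^ 2 := by
    simp only [dotProduct]
    exact Finset.sum_congr rfl fun k _ => by ring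
  have hquadB : z ⬝ᵥ B *ᵥ z = μ₁ * (∑ k, z k ^ 2) + τ * (z ⬝ᵥ P *ᵥ z)
      + τ * ε * μ₃ * (∑ k, w k ^ 2) := by
    rw [hB, add_mulVec, add_mulVec, dotProduct_add, dotProduct_add,
      smul_mulVec, smul_mulVec, smul_mulVec,
      dotProduct_smul, dotProduct_smul, dotProduct_smul, one_mulVec,
      hΔΔ, smul_eq_mul, smul_eq_mul, smul_eq_mul, hself]
  have hp0 : 0 ≤ z ⬝ᵥ P *ᵥ z := by simpa using hP.dotProduct_mulVec_nonneg z
  have hs0 : (0:ℝ) ≤ ∑ k, z k ^ 2 := Finset.sum_nonneg fun k _ => sq_nonneg _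
  have ht0 : (0:ℝ) ≤ ∑ k, w k ^ 2 := Finset.sum_nonneg fun k _ => sq_nonneg _
  have hspos : (0:ℝ) < ∑ k, z k ^ 2 := by
    obtain ⟨k, hk⟩ := Function.ne_iff.mp hz
    exact Finset.sum_pos' (fun i _ => sq_nonneg _) ⟨k, Finset.mem_univ k, pow_pos (abs_pos.mpr hk) 2 |>.trans_le (by rw [← abs_pow, abs_of_nonneg (sq_nonneg _)])⟩
  have hBpos : 0 < z ⬝ᵥ B *ᵥ z := by
    rw [hquadB]
    have h1 : 0 < μ₁ * ∑ k, z k ^ 2 := mul_pos hμ₁pos hspos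
    have h2 : 0 ≤ τ * (z ⬝ᵥ P *ᵥ z) := mul_nonneg hτ.le hp0
    have h3 : 0 ≤ τ * ε * μ₃ * (∑ k, w k ^ 2) := by positivity
    linarith
  -- inf/sup facts
  have hinf_le : ∀ k, (⨅ j, ρ j) ≤ ρ k := fun k => ciInf_le (Finite.bddBelow_range _) k
  have hinf_le' : ∀ k, (⨅ j, (ρ j)⁻¹) ≤ (ρ k)⁻¹ := fun k =>
    ciInf_le (f := fun j => (ρ j)⁻¹) (Finite.bddBelow_range _) k
  have hle_sup : ∀ k, ρ k ≤ ⨆ j, ρ j := fun k => le_ciSup (Finite.bddAbove_range _) k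
  have hle_sup' : ∀ k, (ρ k)⁻¹ ≤ ⨆ j, (ρ j)⁻¹ := fun k =>
    le_ciSup (f := fun j => (ρ j)⁻¹) (Finite.bddAbove_range _) k
  have hinfμ₁ : (⨅ j, ρ j) ≤ μ₁ := by
    rw [hμ₁, le_div_iff₀ hN']
    calc (⨅ j, ρ j) * N = ∑ _k : Fin N, (⨅ j, ρ j) := by
          simp [Finset.sum_const, mul_comm]
      _ ≤ ∑ k, ρ k := Finset.sum_le_sum fun k _ => hinf_le k
  have hinfμ₃ : (⨅ j, (ρ j)⁻¹) ≤ μ₃ := by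
    rw [hμ₃, le_div_iff₀ hN']
    calc (⨅ j, (ρ j)⁻¹) * N = ∑ _k : Fin N, (⨅ j, (ρ j)⁻¹) := by
          simp [Finset.sum_const, mul_comm]
      _ ≤ ∑ k, (ρ k)⁻¹ := Finset.sum_le_sum fun k _ => hinf_le' k
  have hsupμ₁ : μ₁ ≤ ⨆ j, ρ j := by
    rw [hμ₁, div_le_iff₀ hN']
    calc (∑ k, ρ k) ≤ ∑ _k : Fin N, (⨆ j, ρ j) := Finset.sum_le_sum fun k _ => hle_sup k
      _ = (⨆ j, ρ j) * N := by simp [Finset.sum_const, mul_comm]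
  have hsupμ₃ : μ₃ ≤ ⨆ j, (ρ j)⁻¹ := by
    rw [hμ₃, div_le_iff₀ hN']
    calc (∑ k, (ρ k)⁻¹) ≤ ∑ _k : Fin N, (⨆ j, (ρ j)⁻¹) :=
          Finset.sum_le_sum fun k _ => hle_sup' k
      _ = (⨆ j, (ρ j)⁻¹) * N := by simp [Finset.sum_const, mul_comm]
  set m := min ((⨅ k, ρ k) / μ₁) ((⨅ k, (ρ k)⁻¹) / μ₃) with hm
  set M := max ((⨆ k, ρ k) / μ₁) ((⨆ k, (ρ k)⁻¹) / μ₃) with hM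
  have hm1 : m ≤ 1 := le_trans (min_le_left _ _) ((div_le_one hμ₁pos).mpr hinfμ₁)
  have hM1 : 1 ≤ M := le_trans ((one_le_div hμ₁pos).mpr hsupμ₁) (le_max_left _ _)
  constructor
  · rw [le_div_iff₀ hBpos, hquadA, hquadB]
    have ha : m * (μ₁ * ∑ k, z k ^ 2) ≤ ∑ k, ρ k * z k ^ 2 := by
      have h1 : m * μ₁ ≤ ⨅ j, ρ j :=
        (le_div_iff₀ hμ₁pos).mp (min_le_left _ _)
      calc m * (μ₁ * ∑ k, z k ^ 2) = (m * μ₁) * ∑ k, z k ^ 2 := by ring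
        _ ≤ (⨅ j, ρ j) * ∑ k, z k ^ 2 := mul_le_mul_of_nonneg_right h1 hs0
        _ = ∑ k, (⨅ j, ρ j) * z k ^ 2 := Finset.mul_sum _ _ _
        _ ≤ ∑ k, ρ k * z k ^ 2 :=
            Finset.sum_le_sum fun k _ => mul_le_mul_of_nonneg_right (hinf_le k) (sq_nonneg _)
    have hb : m * (τ * (z ⬝ᵥ P *ᵥ z)) ≤ τ * (z ⬝ᵥ P *ᵥ z) := by
      have := mul_le_mul_of_nonneg_right hm1 (mul_nonneg hτ.le hp0)
      linarith
    have hc : m * (τ * ε * μ₃ * ∑ k, w k ^ 2) ≤ τ * ε * (∑ k, (ρ k)⁻¹ * w k ^ 2) := by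
      have h1 : m * μ₃ ≤ ⨅ j, (ρ j)⁻¹ :=
        (le_div_iff₀ hμ₃pos).mp (min_le_right _ _)
      have h2 : (⨅ j, (ρ j)⁻¹) * ∑ k, w k ^ 2 ≤ ∑ k, (ρ k)⁻¹ * w k ^ 2 := by
        rw [Finset.mul_sum]
        exact Finset.sum_le_sum fun k _ =>
          mul_le_mul_of_nonneg_right (hinf_le' k) (sq_nonneg _)
      have h3 : (m * μ₃) * ∑ k, w k ^ 2 ≤ (⨅ j, (ρ j)⁻¹) * ∑ k, w k ^ 2 :=
        mul_le_mul_of_nonneg_right h1 ht0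
      calc m * (τ * ε * μ₃ * ∑ k, w k ^ 2)
          = (τ * ε) * ((m * μ₃) * ∑ k, w k ^ 2) := by ring
        _ ≤ (τ * ε) * (∑ k, (ρ k)⁻¹ * w k ^ 2) :=
            mul_le_mul_of_nonneg_left (h3.trans h2) (by positivity)
    calc m * (μ₁ * (∑ k, z k ^ 2) + τ * (z ⬝ᵥ P *ᵥ z) + τ * ε * μ₃ * ∑ k, w k ^ 2)
        = m * (μ₁ * ∑ k, z k ^ 2) + m * (τ * (z ⬝ᵥ P *ᵥ z))
          + m * (τ * ε * μ₃ * ∑ k, w k ^ 2) := by ring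
      _ ≤ _ := add_le_add (add_le_add ha hb) hc
  · rw [div_le_iff₀ hBpos, hquadA, hquadB]
    have ha : ∑ k, ρ k * z k ^ 2 ≤ M * (μ₁ * ∑ k, z k ^ 2) := by
      have h1 : (⨆ j, ρ j) ≤ M * μ₁ := by
        have := (div_le_iff₀ hμ₁pos).mp (le_max_left ((⨆ k, ρ k) / μ₁) ((⨆ k, (ρ k)⁻¹) / μ₃))
        linarith
      calc ∑ k, ρ k * z k ^ 2 ≤ ∑ k, (⨆ j, ρ j) * z k ^ 2 :=
            Finset.sum_le_sum fun k _ => mul_le_mul_of_nonneg_right (hle_sup k) (sq_nonneg _)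
        _ = (⨆ j, ρ j) * ∑ k, z k ^ 2 := (Finset.mul_sum _ _ _).symm
        _ ≤ (M * μ₁) * ∑ k, z k ^ 2 := mul_le_mul_of_nonneg_right h1 hs0
        _ = M * (μ₁ * ∑ k, z k ^ 2) := by ring
    have hb : τ * (z ⬝ᵥ P *ᵥ z) ≤ M * (τ * (z ⬝ᵥ P *ᵥ z)) := by
      have := mul_le_mul_of_nonneg_right hM1 (mul_nonneg hτ.le hp0)
      linarith
    have hc : τ * ε * (∑ k, (ρ k)⁻¹ * w k ^ 2) ≤ M * (τ * ε * μ₃ * ∑ k, w k ^ 2) := by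
      have h1 : (⨆ j, (ρ j)⁻¹) ≤ M * μ₃ := by
        have := (div_le_iff₀ hμ₃pos).mp (le_max_right ((⨆ k, ρ k) / μ₁) ((⨆ k, (ρ k)⁻¹) / μ₃))
        linarith
      have h2 : ∑ k, (ρ k)⁻¹ * w k ^ 2 ≤ (⨆ j, (ρ j)⁻¹) * ∑ k, w k ^ 2 := by
        rw [Finset.mul_sum]
        exact Finset.sum_le_sum fun k _ =>
          mul_le_mul_of_nonneg_right (hle_sup' k) (sq_nonneg _)
      have h3 : (⨆ j, (ρ j)⁻¹) * ∑ k, w k ^ 2 ≤ (M * μ₃) * ∑ k, w k ^ 2 :=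
        mul_le_mul_of_nonneg_right h1 ht0
      calc τ * ε * (∑ k, (ρ k)⁻¹ * w k ^ 2)
          ≤ (τ * ε) * ((M * μ₃) * ∑ k, w k ^ 2) :=
            mul_le_mul_of_nonneg_left (h2.trans h3) (by positivity)
        _ = M * (τ * ε * μ₃ * ∑ k, w k ^ 2) := by ring
    calc (∑ k, ρ k * z k ^ 2) + τ * (z ⬝ᵥ P *ᵥ z) + τ * ε * (∑ k, (ρ k)⁻¹ * w k ^ 2)
        ≤ M * (μ₁ * ∑ k, z k ^ 2) + M * (τ * (z ⬝ᵥ P *ᵥ z))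
          + M * (τ * ε * μ₃ * ∑ k, w k ^ 2) := add_le_add (add_le_add ha hb) hc
      _ = M * (μ₁ * (∑ k, z k ^ 2) + τ * (z ⬝ᵥ P *ᵥ z) + τ * ε * μ₃ * ∑ k, w k ^ 2) := by ring
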